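/- arXiv:2311.01208 — 2 statements merged into one kernel-verified Lean document; each statement's English description precedes it below -/
import Mathlib

section
/- Let f : [0,1] → ℝ and let c ∈ [0,1]. (1) If f is convex on the interval [0,c], concave on [c,1], and decreasing on [0,1], then L_n(f) is decreasing in n and R_n(f) is increasing in n. (2) If f is concave on [0,c], convex on [c,1], and increasing on [0,1], then L_n(f) is increasing in n and R_n(f) is decreasing in n. -/
open Finset

/-- Left Riemann sum of `f` over the uniform partition of `[0,1]` into `n` parts. -/
noncomputable def riemannL (f : ℝ → ℝ) (n : ℕ) : ℝ :=
  (1 / (n : ℝ)) * ∑ k ∈ Finset.range n, f ((k : ℝ) / (n : ℝ))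

/-- Right Riemann sum of `f` over the uniform partition of `[0,1]` into `n` parts. -/
noncomputable def riemannR (f : ℝ → ℝ) (n : ℕ) : ℝ :=
  (1 / (n : ℝ)) * ∑ k ∈ Finset.Icc 1 n, f ((k : ℝ) / (n : ℝ))

lemma mem01 {n k : ℕ} (hn : 1 ≤ n) (hk : k ≤ n) : ((k:ℝ)/(n:ℝ)) ∈ Set.Icc (0:ℝ) 1 := by
  have hn0 : (0:ℝ) < n := by exact_mod_cast hn
  constructor
  · positivity
  · rw [div_le_one hn0]; exact_mod_cast hk

/-- Convex decreasing case: left sums decrease. -/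
lemma lemA (f : ℝ → ℝ) (hcvx : ConvexOn ℝ (Set.Icc (0:ℝ) 1) f)
    (hmono : AntitoneOn f (Set.Icc (0:ℝ) 1)) (n : ℕ) (hn : 1 ≤ n) :
    riemannL f (n + 1) ≤ riemannL f n := by
  have hN0 : (0:ℝ) < n := by exact_mod_cast hn
  have hN1 : (0:ℝ) < (n:ℝ) + 1 := by linarith
  -- key chord inequality
  have hkey : ∀ k ∈ Finset.range n, ((n:ℝ)+1) * f (((k:ℝ)+1)/((n:ℝ)+1)) ≤
      (((n:ℝ)+2) * f ((k:ℝ)/(n:ℝ)) +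
        ((((n:ℝ)+1-((k:ℝ)+1)) * f (((k:ℝ)+1)/(n:ℝ))) - (((n:ℝ)+1-(k:ℝ)) * f ((k:ℝ)/(n:ℝ))))) := by
    intro k hk
    have hkn : k < n := Finset.mem_range.mp hk
    have hkR : (k:ℝ) + 1 ≤ (n:ℝ) := by exact_mod_cast hkn
    have hkR0 : (0:ℝ) ≤ k := Nat.cast_nonneg k
    have h1 : ((k:ℝ)/(n:ℝ)) ∈ Set.Icc (0:ℝ) 1 := mem01 hn hkn.le
    have h2 : (((k:ℝ)+1)/(n:ℝ)) ∈ Set.Icc (0:ℝ) 1 := by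
      have := mem01 hn (Nat.succ_le_of_lt hkn)
      push_cast at this; exact this
    have ha : (0:ℝ) ≤ ((k:ℝ)+1)/((n:ℝ)+1) := by positivity
    have hb : (0:ℝ) ≤ ((n:ℝ)-(k:ℝ))/((n:ℝ)+1) := by
      apply div_nonneg (by linarith) (by linarith)
    have hab : ((k:ℝ)+1)/((n:ℝ)+1) + ((n:ℝ)-(k:ℝ))/((n:ℝ)+1) = 1 := by
      field_simp
      ring
    have hc := hcvx.2 h1 h2 ha hb hab
    simp only [smul_eq_mul] at hc
    have harg : ((k:ℝ)+1)/((n:ℝ)+1) * ((k:ℝ)/(n:ℝ)) + ((n:ℝ)-(k:ℝ))/((n:ℝ)+1) * (((k:ℝ)+1)/(n:ℝ))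
        = ((k:ℝ)+1)/((n:ℝ)+1) := by
      field_simp
      ring
    rw [harg] at hc
    have hmul := mul_le_mul_of_nonneg_left hc hN1.le
    have : ((n:ℝ)+1) * (((k:ℝ)+1)/((n:ℝ)+1) * f ((k:ℝ)/(n:ℝ)) + ((n:ℝ)-(k:ℝ))/((n:ℝ)+1) * f (((k:ℝ)+1)/(n:ℝ)))
        = ((k:ℝ)+1) * f ((k:ℝ)/(n:ℝ)) + ((n:ℝ)-(k:ℝ)) * f (((k:ℝ)+1)/(n:ℝ)) := by
      field_simp
    rw [this] at hmul
    calc ((n:ℝ)+1) * f (((k:ℝ)+1)/((n:ℝ)+1))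
        ≤ ((k:ℝ)+1) * f ((k:ℝ)/(n:ℝ)) + ((n:ℝ)-(k:ℝ)) * f (((k:ℝ)+1)/(n:ℝ)) := hmul
      _ = _ := by ring
  have hsum := Finset.sum_le_sum hkey
  rw [← Finset.mul_sum, Finset.sum_add_distrib, ← Finset.mul_sum] at hsum
  -- telescoping part
  have tel := Finset.sum_range_sub (fun k : ℕ => ((n:ℝ)+1-(k:ℝ)) * f ((k:ℝ)/(n:ℝ))) n
  simp only [Nat.cast_add, Nat.cast_one, Nat.cast_zero] at tel
  have htelsum : ∑ k ∈ Finset.range n,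
      ((((n:ℝ)+1-((k:ℝ)+1)) * f (((k:ℝ)+1)/(n:ℝ))) - (((n:ℝ)+1-(k:ℝ)) * f ((k:ℝ)/(n:ℝ))))
      = ((n:ℝ)+1-(n:ℝ)) * f ((n:ℝ)/(n:ℝ)) - ((n:ℝ)+1-0) * f (0/(n:ℝ)) := by
    rw [← tel]
  rw [htelsum] at hsum
  rw [div_self hN0.ne', zero_div] at hsum
  -- now hsum : (n+1) * Σ' ≤ (n+2) * S + (1 * f 1 - (n+1-0) * f 0)
  have hS1 : (n:ℝ) * f 1 ≤ ∑ k ∈ Finset.range n, f ((k:ℝ)/(n:ℝ)) := by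
    have : ∀ k ∈ Finset.range n, f 1 ≤ f ((k:ℝ)/(n:ℝ)) := by
      intro k hk
      have hkn : k < n := Finset.mem_range.mp hk
      have h1 := mem01 hn hkn.le
      exact hmono h1 (by norm_num : (1:ℝ) ∈ Set.Icc (0:ℝ) 1) h1.2
    calc (n:ℝ) * f 1 = ∑ _k ∈ Finset.range n, f 1 := by
          rw [Finset.sum_const, Finset.card_range, nsmul_eq_mul]
      _ ≤ _ := Finset.sum_le_sum this
  have hT : ∑ k ∈ Finset.range (n+1), f ((k:ℝ)/((n:ℝ)+1))
      = f 0 + ∑ k ∈ Finset.range n, f (((k:ℝ)+1)/((n:ℝ)+1)) := by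
    rw [Finset.sum_range_succ' (fun k : ℕ => f ((k:ℝ)/((n:ℝ)+1))) n]
    push_cast
    rw [zero_div]
    ring
  -- final arithmetic
  unfold riemannL
  push_cast
  rw [hT]
  rw [one_div_mul_eq_div, one_div_mul_eq_div, div_le_div_iff₀ hN1 hN0]
  set S : ℝ := ∑ k ∈ Finset.range n, f ((k:ℝ)/(n:ℝ)) with hSdef
  set SB : ℝ := ∑ k ∈ Finset.range n, f (((k:ℝ)+1)/((n:ℝ)+1)) with hSBdef
  nlinarith [hsum, hS1, mul_le_mul_of_nonneg_left hsum hN0.le, mul_le_mul_of_nonneg_left hS1 hN1.le]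

/-- Concave decreasing case: left sums decrease. -/
lemma lemB (f : ℝ → ℝ) (hccv : ConcaveOn ℝ (Set.Icc (0:ℝ) 1) f)
    (hmono : AntitoneOn f (Set.Icc (0:ℝ) 1)) (n : ℕ) (hn : 1 ≤ n) :
    riemannL f (n + 1) ≤ riemannL f n := by
  have hN0 : (0:ℝ) < n := by exact_mod_cast hn
  have hN1 : (0:ℝ) < (n:ℝ) + 1 := by linarith
  have hn1 : (1:ℝ) ≤ (n:ℝ) := by exact_mod_cast hn
  -- key chord inequality :  (n-j) f(j/(n+1)) + j f((j+1)/(n+1)) ≤ n f(j/n)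
  -- rewritten as (n-1) f(j/(n+1)) + (G(j+1)-G(j)) ≤ n f(j/n), G j = (j-1) f(j/(n+1))
  have hkey : ∀ k ∈ Finset.range n,
      (((n:ℝ)-1) * f ((k:ℝ)/((n:ℝ)+1)) +
        (((((k:ℝ)+1)-1) * f (((k:ℝ)+1)/((n:ℝ)+1))) - (((k:ℝ)-1) * f ((k:ℝ)/((n:ℝ)+1)))))
      ≤ (n:ℝ) * f ((k:ℝ)/(n:ℝ)) := by
    intro k hk
    have hkn : k < n := Finset.mem_range.mp hk
    have hkR : (k:ℝ) + 1 ≤ (n:ℝ) := by exact_mod_cast hkn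
    have hkR0 : (0:ℝ) ≤ k := Nat.cast_nonneg k
    have h1 : ((k:ℝ)/((n:ℝ)+1)) ∈ Set.Icc (0:ℝ) 1 := by
      constructor
      · positivity
      · rw [div_le_one hN1]; linarith
    have h2 : (((k:ℝ)+1)/((n:ℝ)+1)) ∈ Set.Icc (0:ℝ) 1 := by
      constructor
      · positivity
      · rw [div_le_one hN1]; linarith
    have ha : (0:ℝ) ≤ ((n:ℝ)-(k:ℝ))/(n:ℝ) := by
      apply div_nonneg (by linarith) hN0.le
    have hb : (0:ℝ) ≤ (k:ℝ)/(n:ℝ) := by positivity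
    have hab : ((n:ℝ)-(k:ℝ))/(n:ℝ) + (k:ℝ)/(n:ℝ) = 1 := by
      field_simp
      ring
    have hc := hccv.2 h1 h2 ha hb hab
    simp only [smul_eq_mul] at hc
    have harg : ((n:ℝ)-(k:ℝ))/(n:ℝ) * ((k:ℝ)/((n:ℝ)+1)) + (k:ℝ)/(n:ℝ) * (((k:ℝ)+1)/((n:ℝ)+1))
        = (k:ℝ)/(n:ℝ) := by
      field_simp
      ring
    rw [harg] at hc
    have hmul := mul_le_mul_of_nonneg_left hc hN0.le
    have heq : (n:ℝ) * (((n:ℝ)-(k:ℝ))/(n:ℝ) * f ((k:ℝ)/((n:ℝ)+1)) + (k:ℝ)/(n:ℝ) * f (((k:ℝ)+1)/((n:ℝ)+1)))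
        = ((n:ℝ)-(k:ℝ)) * f ((k:ℝ)/((n:ℝ)+1)) + (k:ℝ) * f (((k:ℝ)+1)/((n:ℝ)+1)) := by
      field_simp
    rw [heq] at hmul
    calc (((n:ℝ)-1) * f ((k:ℝ)/((n:ℝ)+1)) +
        (((((k:ℝ)+1)-1) * f (((k:ℝ)+1)/((n:ℝ)+1))) - (((k:ℝ)-1) * f ((k:ℝ)/((n:ℝ)+1)))))
        = ((n:ℝ)-(k:ℝ)) * f ((k:ℝ)/((n:ℝ)+1)) + (k:ℝ) * f (((k:ℝ)+1)/((n:ℝ)+1)) := by ring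
      _ ≤ (n:ℝ) * f ((k:ℝ)/(n:ℝ)) := hmul
  have hsum := Finset.sum_le_sum hkey
  rw [Finset.sum_add_distrib, ← Finset.mul_sum, ← Finset.mul_sum] at hsum
  have tel := Finset.sum_range_sub (fun k : ℕ => ((k:ℝ)-1) * f ((k:ℝ)/((n:ℝ)+1))) n
  simp only [Nat.cast_add, Nat.cast_one, Nat.cast_zero] at tel
  have htelsum : ∑ k ∈ Finset.range n,
      (((((k:ℝ)+1)-1) * f (((k:ℝ)+1)/((n:ℝ)+1))) - (((k:ℝ)-1) * f ((k:ℝ)/((n:ℝ)+1))))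
      = ((n:ℝ)-1) * f ((n:ℝ)/((n:ℝ)+1)) - ((0:ℝ)-1) * f (0/((n:ℝ)+1)) := by
    rw [← tel]
  rw [htelsum, zero_div] at hsum
  -- hsum : (n-1) * ∑_{range n} f(k/(n+1)) + ((n-1) f(n/(n+1)) - (0-1) f 0) ≤ n * S
  have hTsplit : ∑ k ∈ Finset.range (n+1), f ((k:ℝ)/((n:ℝ)+1))
      = (∑ k ∈ Finset.range n, f ((k:ℝ)/((n:ℝ)+1))) + f ((n:ℝ)/((n:ℝ)+1)) := by
    rw [Finset.sum_range_succ]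
  have hT0 : ∑ k ∈ Finset.range (n+1), f ((k:ℝ)/((n:ℝ)+1)) ≤ ((n:ℝ)+1) * f 0 := by
    have : ∀ k ∈ Finset.range (n+1), f ((k:ℝ)/((n:ℝ)+1)) ≤ f 0 := by
      intro k hk
      have hkn : k ≤ n := Nat.lt_succ_iff.mp (Finset.mem_range.mp hk)
      have h1 : ((k:ℝ)/((n:ℝ)+1)) ∈ Set.Icc (0:ℝ) 1 := by
        constructor
        · positivity
        · rw [div_le_one hN1]; have : (k:ℝ) ≤ n := by exact_mod_cast hkn
          linarith
      exact hmono (by norm_num : (0:ℝ) ∈ Set.Icc (0:ℝ) 1) h1 h1.1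
    calc ∑ k ∈ Finset.range (n+1), f ((k:ℝ)/((n:ℝ)+1)) ≤ ∑ _k ∈ Finset.range (n+1), f 0 :=
          Finset.sum_le_sum this
      _ = ((n:ℝ)+1) * f 0 := by
          rw [Finset.sum_const, Finset.card_range, nsmul_eq_mul]; push_cast; ring
  unfold riemannL
  push_cast
  rw [one_div_mul_eq_div, one_div_mul_eq_div, div_le_div_iff₀ hN1 hN0]
  set S : ℝ := ∑ k ∈ Finset.range n, f ((k:ℝ)/(n:ℝ)) with hSdef
  set U : ℝ := ∑ k ∈ Finset.range n, f ((k:ℝ)/((n:ℝ)+1)) with hUdef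
  set T : ℝ := ∑ k ∈ Finset.range (n+1), f ((k:ℝ)/((n:ℝ)+1)) with hTdef
  -- hsum : (n-1)*U + ((n-1) * f(n/(n+1)) - (0-1)*f 0) ≤ n * S
  -- hTsplit : T = U + f(n/(n+1)) ; hT0 : T ≤ (n+1) f 0
  -- want : T * n ≤ S * (n+1)
  have h1 : ((n:ℝ)-1) * T + f 0 ≤ (n:ℝ) * S := by
    rw [hTsplit]; linarith [hsum]
  have h2 := mul_le_mul_of_nonneg_left h1 hN1.le
  have h3 : (n:ℝ)^2 * T ≤ (n:ℝ)*(((n:ℝ)+1)*S) := by nlinarith [h2, hT0]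
  nlinarith [h3, hN0]

/-- Main lemma: convex on [0,c], concave on [c,1], decreasing: left sums decrease. -/
lemma lemMain (f : ℝ → ℝ) (c : ℝ) (hc : c ∈ Set.Icc (0:ℝ) 1)
    (h1 : ConvexOn ℝ (Set.Icc (0:ℝ) c) f) (h2 : ConcaveOn ℝ (Set.Icc c 1) f)
    (h3 : AntitoneOn f (Set.Icc (0:ℝ) 1)) (n : ℕ) (hn : 1 ≤ n) :
    riemannL f (n + 1) ≤ riemannL f n := by
  obtain ⟨hc0, hc1⟩ := hc
  set g : ℝ → ℝ := fun x => f (min x c) with hgdef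
  set h : ℝ → ℝ := fun x => f (max x c) with hhdef
  have hIcc : Set.Icc (0:ℝ) c ⊆ Set.Icc (0:ℝ) 1 := Set.Icc_subset_Icc le_rfl hc1
  have hIcc' : Set.Icc c (1:ℝ) ⊆ Set.Icc (0:ℝ) 1 := Set.Icc_subset_Icc hc0 le_rfl
  -- g is convex on [0,1]
  have hgcvx : ConvexOn ℝ (Set.Icc (0:ℝ) 1) g := by
    refine ⟨convex_Icc _ _, ?_⟩
    intro x hx y hy a b ha hb hab
    simp only [smul_eq_mul, hgdef]
    have m1 : min x c ∈ Set.Icc (0:ℝ) c := ⟨le_min hx.1 hc0, min_le_right _ _⟩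
    have m2 : min y c ∈ Set.Icc (0:ℝ) c := ⟨le_min hy.1 hc0, min_le_right _ _⟩
    have mcomb : a * min x c + b * min y c ∈ Set.Icc (0:ℝ) c := by
      have := h1.1 m1 m2 ha hb hab
      simpa [smul_eq_mul] using this
    have hle : a * min x c + b * min y c ≤ min (a * x + b * y) c := by
      apply le_min
      · have t1 : a * min x c ≤ a * x := mul_le_mul_of_nonneg_left (min_le_left _ _) ha
        have t2 : b * min y c ≤ b * y := mul_le_mul_of_nonneg_left (min_le_left _ _) hb
        linarith
      · have t1 : a * min x c ≤ a * c := mul_le_mul_of_nonneg_left (min_le_right _ _) ha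
        have t2 : b * min y c ≤ b * c := mul_le_mul_of_nonneg_left (min_le_right _ _) hb
        nlinarith
    have mz : min (a * x + b * y) c ∈ Set.Icc (0:ℝ) 1 := by
      constructor
      · apply le_min _ hc0
        have := mul_nonneg ha hx.1
        have := mul_nonneg hb hy.1
        linarith
      · exact le_trans (min_le_right _ _) hc1
    calc f (min (a * x + b * y) c) ≤ f (a * min x c + b * min y c) :=
          h3 (hIcc mcomb) mz hle
      _ ≤ a * f (min x c) + b * f (min y c) := by
          have := h1.2 m1 m2 ha hb hab
          simpa [smul_eq_mul] using this
  -- g is antitone on [0,1]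
  have hgmono : AntitoneOn g (Set.Icc (0:ℝ) 1) := by
    intro x hx y hy hxy
    exact h3 (hIcc ⟨le_min hx.1 hc0, min_le_right _ _⟩)
      (hIcc ⟨le_min hy.1 hc0, min_le_right _ _⟩) (min_le_min hxy le_rfl)
  -- h is concave on [0,1]
  have hhccv : ConcaveOn ℝ (Set.Icc (0:ℝ) 1) h := by
    refine ⟨convex_Icc _ _, ?_⟩
    intro x hx y hy a b ha hb hab
    simp only [smul_eq_mul, hhdef]
    have m1 : max x c ∈ Set.Icc c (1:ℝ) := ⟨le_max_right _ _, max_le hx.2 hc1⟩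
    have m2 : max y c ∈ Set.Icc c (1:ℝ) := ⟨le_max_right _ _, max_le hy.2 hc1⟩
    have mcomb : a * max x c + b * max y c ∈ Set.Icc c (1:ℝ) := by
      have := h2.1 m1 m2 ha hb hab
      simpa [smul_eq_mul] using this
    have hle : max (a * x + b * y) c ≤ a * max x c + b * max y c := by
      apply max_le
      · have t1 : a * x ≤ a * max x c := mul_le_mul_of_nonneg_left (le_max_left _ _) ha
        have t2 : b * y ≤ b * max y c := mul_le_mul_of_nonneg_left (le_max_left _ _) hb
        linarith
      · have t1 : a * c ≤ a * max x c := mul_le_mul_of_nonneg_left (le_max_right _ _) ha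
        have t2 : b * c ≤ b * max y c := mul_le_mul_of_nonneg_left (le_max_right _ _) hb
        nlinarith
    have mz : max (a * x + b * y) c ∈ Set.Icc (0:ℝ) 1 := by
      constructor
      · exact le_trans hc0 (le_max_right _ _)
      · apply max_le _ hc1
        have t1 : a * x ≤ a * 1 := mul_le_mul_of_nonneg_left hx.2 ha
        have t2 : b * y ≤ b * 1 := mul_le_mul_of_nonneg_left hy.2 hb
        nlinarith
    calc a * f (max x c) + b * f (max y c) ≤ f (a * max x c + b * max y c) := by
          have := h2.2 m1 m2 ha hb hab
          simpa [smul_eq_mul] using this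
      _ ≤ f (max (a * x + b * y) c) := h3 mz (hIcc' mcomb) hle
  -- h is antitone on [0,1]
  have hhmono : AntitoneOn h (Set.Icc (0:ℝ) 1) := by
    intro x hx y hy hxy
    exact h3 (hIcc' ⟨le_max_right _ _, max_le hx.2 hc1⟩)
      (hIcc' ⟨le_max_right _ _, max_le hy.2 hc1⟩) (max_le_max hxy le_rfl)
  -- decomposition
  have hdec : ∀ x : ℝ, f x = g x + h x - f c := by
    intro x
    rcases le_total x c with h' | h'
    · simp only [hgdef, hhdef, min_eq_left h', max_eq_right h']
      ring
    · simp only [hgdef, hhdef, min_eq_right h', max_eq_left h']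
      ring
  have hLdec : ∀ m : ℕ, 1 ≤ m → riemannL f m = riemannL g m + riemannL h m - f c := by
    intro m hm
    have hm0 : (m:ℝ) ≠ 0 := by
      have : (0:ℝ) < m := by exact_mod_cast hm
      exact this.ne'
    unfold riemannL
    have : ∑ k ∈ Finset.range m, f ((k:ℝ)/(m:ℝ))
        = (∑ k ∈ Finset.range m, g ((k:ℝ)/(m:ℝ))) + (∑ k ∈ Finset.range m, h ((k:ℝ)/(m:ℝ)))
          - (m:ℝ) * f c := by
      rw [← Finset.sum_add_distrib]
      have e1 : ∑ k ∈ Finset.range m, f ((k:ℝ)/(m:ℝ))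
          = ∑ k ∈ Finset.range m, (g ((k:ℝ)/(m:ℝ)) + h ((k:ℝ)/(m:ℝ)) - f c) :=
        Finset.sum_congr rfl (fun k _ => by rw [hdec]; )
      rw [e1, Finset.sum_sub_distrib, Finset.sum_const, Finset.card_range, nsmul_eq_mul]
    rw [this]
    field_simp
  rw [hLdec n hn, hLdec (n+1) (by omega)]
  have := lemA g hgcvx hgmono n hn
  have := lemB h hhccv hhmono n hn
  linarith

lemma riemannL_neg (f : ℝ → ℝ) (n : ℕ) : riemannL (fun x => -f x) n = - riemannL f n := by
  unfold riemannL
  rw [Finset.sum_neg_distrib]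
  ring

lemma riemannL_reflect (f : ℝ → ℝ) (n : ℕ) :
    riemannL (fun x => f (1 - x)) n = riemannR f n := by
  rcases Nat.eq_zero_or_pos n with h | h
  · subst h; simp [riemannL, riemannR]
  have hN0 : (0:ℝ) < n := by exact_mod_cast h
  unfold riemannL riemannR
  congr 1
  -- ∑_{k∈range n} f (1 - k/n) = ∑_{k∈Icc 1 n} f (k/n)
  have e1 : ∑ k ∈ Finset.Icc 1 n, f ((k:ℝ)/(n:ℝ))
      = ∑ k ∈ Finset.range n, f (((1+k : ℕ):ℝ)/(n:ℝ)) := by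
    rw [← Finset.Ico_add_one_right_eq_Icc, Finset.sum_Ico_eq_sum_range]
    simp
  rw [e1, ← Finset.sum_range_reflect (fun k : ℕ => f (((1+k : ℕ):ℝ)/(n:ℝ))) n]
  apply Finset.sum_congr rfl
  intro j hj
  have hjn : j < n := Finset.mem_range.mp hj
  have h1 : 1 + (n - 1 - j) = n - j := by omega
  have h2 : ((n - j : ℕ):ℝ) = (n:ℝ) - (j:ℝ) := by
    have : j ≤ n := hjn.le
    push_cast [Nat.cast_sub this]
    ring
  rw [h1, h2]
  congr 1
  field_simp

lemma reflect_cvx {a b : ℝ} {f : ℝ → ℝ} (hf : ConvexOn ℝ (Set.Icc a b) f) :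
    ConvexOn ℝ (Set.Icc (1-b) (1-a)) (fun x => f (1-x)) := by
  refine ⟨convex_Icc _ _, ?_⟩
  intro x hx y hy p q hp hq hpq
  simp only [smul_eq_mul]
  have hx' : 1 - x ∈ Set.Icc a b := ⟨by linarith [hx.2], by linarith [hx.1]⟩
  have hy' : 1 - y ∈ Set.Icc a b := ⟨by linarith [hy.2], by linarith [hy.1]⟩
  have hc := hf.2 hx' hy' hp hq hpq
  simp only [smul_eq_mul] at hc
  have harg : p * (1-x) + q * (1-y) = 1 - (p*x + q*y) := by linarith [hpq]
  rwa [harg] at hc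

lemma reflect_ccv {a b : ℝ} {f : ℝ → ℝ} (hf : ConcaveOn ℝ (Set.Icc a b) f) :
    ConcaveOn ℝ (Set.Icc (1-b) (1-a)) (fun x => f (1-x)) := by
  refine ⟨convex_Icc _ _, ?_⟩
  intro x hx y hy p q hp hq hpq
  simp only [smul_eq_mul]
  have hx' : 1 - x ∈ Set.Icc a b := ⟨by linarith [hx.2], by linarith [hx.1]⟩
  have hy' : 1 - y ∈ Set.Icc a b := ⟨by linarith [hy.2], by linarith [hy.1]⟩
  have hc := hf.2 hx' hy' hp hq hpq
  simp only [smul_eq_mul] at hc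
  have harg : p * (1-x) + q * (1-y) = 1 - (p*x + q*y) := by linarith [hpq]
  rwa [harg] at hc

lemma neg_cvx {s : Set ℝ} {f : ℝ → ℝ} (hf : ConcaveOn ℝ s f) :
    ConvexOn ℝ s (fun x => -f x) := hf.neg

lemma neg_ccv {s : Set ℝ} {f : ℝ → ℝ} (hf : ConvexOn ℝ s f) :
    ConcaveOn ℝ s (fun x => -f x) := hf.neg

theorem stmt5 (f : ℝ → ℝ) (c : ℝ) (hc : c ∈ Set.Icc (0:ℝ) 1) :
    ((ConvexOn ℝ (Set.Icc (0:ℝ) c) f ∧ ConcaveOn ℝ (Set.Icc c 1) f ∧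
        AntitoneOn f (Set.Icc (0:ℝ) 1)) →
      (∀ n : ℕ, 1 ≤ n → riemannL f (n + 1) ≤ riemannL f n) ∧
      (∀ n : ℕ, 1 ≤ n → riemannR f n ≤ riemannR f (n + 1))) ∧
    ((ConcaveOn ℝ (Set.Icc (0:ℝ) c) f ∧ ConvexOn ℝ (Set.Icc c 1) f ∧
        MonotoneOn f (Set.Icc (0:ℝ) 1)) →
      (∀ n : ℕ, 1 ≤ n → riemannL f n ≤ riemannL f (n + 1)) ∧
      (∀ n : ℕ, 1 ≤ n → riemannR f (n + 1) ≤ riemannR f n)) := by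
  obtain ⟨hc0, hc1⟩ := hc
  have hc' : (1 - c) ∈ Set.Icc (0:ℝ) 1 := ⟨by linarith, by linarith⟩
  constructor
  · rintro ⟨hcx, hcc, hmono⟩
    constructor
    · exact fun n hn => lemMain f c ⟨hc0, hc1⟩ hcx hcc hmono n hn
    · -- R increasing; apply Main to  g = fun x => -f (1-x)  with c' = 1-c
      intro n hn
      have g1 : ConvexOn ℝ (Set.Icc (0:ℝ) (1-c)) (fun x => -f (1-x)) := by
        have := neg_cvx (reflect_ccv hcc)
        simpa using this
      have g2 : ConcaveOn ℝ (Set.Icc (1-c) 1) (fun x => -f (1-x)) := by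
        have := neg_ccv (reflect_cvx hcx)
        simpa using this
      have g3 : AntitoneOn (fun x => -f (1-x)) (Set.Icc (0:ℝ) 1) := by
        intro x hx y hy hxy
        have hx' : 1 - x ∈ Set.Icc (0:ℝ) 1 := ⟨by linarith [hx.2], by linarith [hx.1]⟩
        have hy' : 1 - y ∈ Set.Icc (0:ℝ) 1 := ⟨by linarith [hy.2], by linarith [hy.1]⟩
        have := hmono hy' hx' (by linarith)
        simpa using this
      have := lemMain (fun x => -f (1-x)) (1-c) hc' g1 g2 g3 n hn
      have e1 : ∀ m : ℕ, riemannL (fun x => -f (1-x)) m = - riemannR f m := by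
        intro m
        rw [← riemannL_reflect f m]
        exact riemannL_neg (fun y => f (1-y)) m
      rw [e1, e1] at this
      linarith
  · rintro ⟨hcc, hcx, hmono⟩
    constructor
    · -- L increasing; apply Main to -f
      intro n hn
      have g1 : ConvexOn ℝ (Set.Icc (0:ℝ) c) (fun x => -f x) := neg_cvx hcc
      have g2 : ConcaveOn ℝ (Set.Icc c 1) (fun x => -f x) := neg_ccv hcx
      have g3 : AntitoneOn (fun x => -f x) (Set.Icc (0:ℝ) 1) := by
        intro x hx y hy hxy
        simpa using hmono hx hy hxy
      have := lemMain (fun x => -f x) c ⟨hc0, hc1⟩ g1 g2 g3 n hn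
      rw [riemannL_neg, riemannL_neg] at this
      linarith
    · -- R decreasing; apply Main to fun x => f (1-x) with c' = 1-c
      intro n hn
      have g1 : ConvexOn ℝ (Set.Icc (0:ℝ) (1-c)) (fun x => f (1-x)) := by
        have := reflect_cvx hcx
        simpa using this
      have g2 : ConcaveOn ℝ (Set.Icc (1-c) 1) (fun x => f (1-x)) := by
        have := reflect_ccv hcc
        simpa using this
      have g3 : AntitoneOn (fun x => f (1-x)) (Set.Icc (0:ℝ) 1) := by
        intro x hx y hy hxy
        have hx' : 1 - x ∈ Set.Icc (0:ℝ) 1 := ⟨by linarith [hx.2], by linarith [hx.1]⟩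
        have hy' : 1 - y ∈ Set.Icc (0:ℝ) 1 := ⟨by linarith [hy.2], by linarith [hy.1]⟩
        exact hmono hy' hx' (by linarith)
      have := lemMain (fun x => f (1-x)) (1-c) hc' g1 g2 g3 n hn
      rw [riemannL_reflect, riemannL_reflect] at this
      exact this
end

section
/- Let f : [0,1] → ℝ and let c ∈ [0,1]. (1) If f is concave on [0,1] and attains its maximum value f(c) at c, then the sequence n ↦ R_n(f) − (f(c)−f(0))/n, which equals n ↦ L_n(f) − (f(c)−f(1))/n, is increasing in n. (2) If f is convex on [0,1] and attains its minimum value f(c) at c, then the sequence n ↦ R_n(f) − (f(c)−f(0))/n = L_n(f) − (f(c)−f(1))/n is decreasing in n. -/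
open Finset

noncomputable def Tsum (f : ℝ → ℝ) (n : ℕ) : ℝ := ∑ k ∈ Finset.range (n+1), f ((k : ℝ) / (n : ℝ))

lemma range_succ_eq (n : ℕ) : Finset.range (n+1) = insert 0 (Finset.Icc 1 n) := by
  ext k; simp [Finset.mem_range, Finset.mem_Icc]; omega

lemma sum_Icc_eq (f : ℝ → ℝ) (n : ℕ) :
    ∑ k ∈ Finset.Icc 1 n, f ((k : ℝ) / (n : ℝ)) = Tsum f n - f 0 := by
  have h0 : (0 : ℕ) ∉ Finset.Icc 1 n := by simp
  rw [Tsum, range_succ_eq, Finset.sum_insert h0]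
  simp

lemma Tsum_succ_top (f : ℝ → ℝ) (n : ℕ) (hn : 1 ≤ n) :
    Tsum f n = (∑ k ∈ Finset.range n, f ((k : ℝ) / (n : ℝ))) + f 1 := by
  have : ((n:ℝ)/(n:ℝ)) = 1 := div_self (by positivity)
  rw [Tsum, Finset.sum_range_succ, this]

-- pointwise: for k in range (n+2),
-- (n+1) * f(k/(n+1)) ≤ k * f((k-1)/n) + (n+1-k) * f(k/n)
lemma pointwise (f : ℝ → ℝ) (hf : ConvexOn ℝ (Set.Icc (0:ℝ) 1) f) (n : ℕ) (hn : 1 ≤ n)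
    (k : ℕ) (hk : k ∈ Finset.range (n+2)) :
    ((n:ℝ)+1) * f ((k:ℝ) / ((n:ℝ)+1)) ≤
      (k:ℝ) * f (((k:ℝ)-1) / (n:ℝ)) + ((n:ℝ)+1-(k:ℝ)) * f ((k:ℝ) / (n:ℝ)) := by
  have hnpos : (0:ℝ) < (n:ℝ) := by exact_mod_cast hn
  rw [Finset.mem_range] at hk
  rcases Nat.eq_zero_or_pos k with hk0 | hk1
  · subst hk0; simp
  rcases eq_or_lt_of_le (Nat.lt_succ_iff.mp hk) with hktop | hkn
  · -- k = n+1
    rw [hktop]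
    push_cast
    have : ((n:ℝ)+1-1)/(n:ℝ) = 1 := by field_simp; ring
    rw [this]
    have : ((n:ℝ)+1)/((n:ℝ)+1) = 1 := by field_simp
    rw [this]
    ring_nf
    exact le_refl _
  · -- 1 ≤ k ≤ n : use convexity
    have hkn' : k ≤ n := Nat.lt_succ_iff.mp hkn
    have hkR : (1:ℝ) ≤ (k:ℝ) := by exact_mod_cast hk1
    have hkRn : (k:ℝ) ≤ (n:ℝ) := by exact_mod_cast hkn'
    set a : ℝ := (k:ℝ)/((n:ℝ)+1) with ha
    set b : ℝ := ((n:ℝ)+1-(k:ℝ))/((n:ℝ)+1) with hb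
    have hx : ((k:ℝ)-1)/(n:ℝ) ∈ Set.Icc (0:ℝ) 1 := by
      constructor
      · apply div_nonneg (by linarith) (le_of_lt hnpos)
      · rw [div_le_one hnpos]; linarith
    have hy : ((k:ℝ))/(n:ℝ) ∈ Set.Icc (0:ℝ) 1 := by
      constructor
      · positivity
      · rw [div_le_one hnpos]; linarith
    have hab : a + b = 1 := by rw [ha, hb]; field_simp; ring
    have haz : 0 ≤ a := by positivity
    have hbz : 0 ≤ b := by
      rw [hb]; apply div_nonneg (by linarith) (by linarith)
    have hcomb : a • (((k:ℝ)-1)/(n:ℝ)) + b • ((k:ℝ)/(n:ℝ)) = (k:ℝ)/((n:ℝ)+1) := by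
      rw [ha, hb, smul_eq_mul, smul_eq_mul]; have hn0 : (n:ℝ) ≠ 0 := hnpos.ne'; have hn1' : (n:ℝ)+1 ≠ 0 := by positivity
      field_simp; ring
    have := hf.2 hx hy haz hbz hab
    rw [hcomb] at this
    have h2 : f ((k:ℝ)/((n:ℝ)+1)) ≤ a * f (((k:ℝ)-1)/(n:ℝ)) + b * f ((k:ℝ)/(n:ℝ)) := this
    have hn1 : (0:ℝ) < (n:ℝ)+1 := by linarith
    rw [ha, hb] at h2
    calc ((n:ℝ)+1) * f ((k:ℝ)/((n:ℝ)+1))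
        ≤ ((n:ℝ)+1) * ((k:ℝ)/((n:ℝ)+1) * f (((k:ℝ)-1)/(n:ℝ)) + ((n:ℝ)+1-(k:ℝ))/((n:ℝ)+1) * f ((k:ℝ)/(n:ℝ))) := by
          exact mul_le_mul_of_nonneg_left h2 (le_of_lt hn1)
      _ = (k:ℝ) * f (((k:ℝ)-1)/(n:ℝ)) + ((n:ℝ)+1-(k:ℝ)) * f ((k:ℝ)/(n:ℝ)) := by
          field_simp

lemma key_sum (f : ℝ → ℝ) (hf : ConvexOn ℝ (Set.Icc (0:ℝ) 1) f) (n : ℕ) (hn : 1 ≤ n) :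
    ((n:ℝ)+1) * Tsum f (n+1) ≤ ((n:ℝ)+2) * Tsum f n := by
  have h1 : ((n:ℝ)+1) * Tsum f (n+1)
      = ∑ k ∈ Finset.range (n+2), ((n:ℝ)+1) * f ((k:ℝ) / ((n:ℝ)+1)) := by
    rw [Tsum, Finset.mul_sum]
    norm_num
  have h2 : ∑ k ∈ Finset.range (n+2), ((n:ℝ)+1) * f ((k:ℝ) / ((n:ℝ)+1))
      ≤ ∑ k ∈ Finset.range (n+2),
          ((k:ℝ) * f (((k:ℝ)-1) / (n:ℝ)) + ((n:ℝ)+1-(k:ℝ)) * f ((k:ℝ) / (n:ℝ))) :=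
    Finset.sum_le_sum (fun k hk => pointwise f hf n hn k hk)
  have h3 : ∑ k ∈ Finset.range (n+2),
          ((k:ℝ) * f (((k:ℝ)-1) / (n:ℝ)) + ((n:ℝ)+1-(k:ℝ)) * f ((k:ℝ) / (n:ℝ)))
      = ((n:ℝ)+2) * Tsum f n := by
    rw [Finset.sum_add_distrib]
    have hA : ∑ k ∈ Finset.range (n+2), (k:ℝ) * f (((k:ℝ)-1) / (n:ℝ))
        = ∑ i ∈ Finset.range (n+1), ((i:ℝ)+1) * f ((i:ℝ) / (n:ℝ)) := by
      rw [Finset.sum_range_succ' (fun k => (k:ℝ) * f (((k:ℝ)-1) / (n:ℝ))) (n+1)]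
      push_cast
      simp only [add_sub_cancel_right]
      simp
    have hB : ∑ k ∈ Finset.range (n+2), ((n:ℝ)+1-(k:ℝ)) * f ((k:ℝ) / (n:ℝ))
        = ∑ i ∈ Finset.range (n+1), ((n:ℝ)+1-(i:ℝ)) * f ((i:ℝ) / (n:ℝ)) := by
      rw [Finset.sum_range_succ]
      push_cast
      simp
    rw [hA, hB, ← Finset.sum_add_distrib, Tsum, Finset.mul_sum]
    apply Finset.sum_congr rfl
    intro i _
    ring
  linarith

lemma Tsum_ge (f : ℝ → ℝ) (c : ℝ) (hmin : ∀ x ∈ Set.Icc (0:ℝ) 1, f c ≤ f x)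
    (n : ℕ) (hn : 1 ≤ n) : ((n:ℝ)+1) * f c ≤ Tsum f n := by
  have hnpos : (0:ℝ) < (n:ℝ) := by exact_mod_cast hn
  have : ∑ k ∈ Finset.range (n+1), f c ≤ Tsum f n := by
    apply Finset.sum_le_sum
    intro k hk
    rw [Finset.mem_range, Nat.lt_succ_iff] at hk
    apply hmin
    constructor
    · positivity
    · rw [div_le_one hnpos]; exact_mod_cast hk
  simpa [Finset.sum_const, mul_comm] using this

lemma riemannR_eq_Tsum (f : ℝ → ℝ) (n : ℕ) :
    riemannR f n = (1 / (n:ℝ)) * (Tsum f n - f 0) := by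
  rw [riemannR, sum_Icc_eq]

lemma key_convex (f : ℝ → ℝ) (c : ℝ) (hf : ConvexOn ℝ (Set.Icc (0:ℝ) 1) f)
    (hmin : ∀ x ∈ Set.Icc (0:ℝ) 1, f c ≤ f x) (n : ℕ) (hn : 1 ≤ n) :
    riemannR f (n + 1) - (f c - f 0) / ((n : ℝ) + 1) ≤
      riemannR f n - (f c - f 0) / (n : ℝ) := by
  have hnpos : (0:ℝ) < (n:ℝ) := by exact_mod_cast hn
  have hn1 : (0:ℝ) < (n:ℝ)+1 := by linarith
  have h1 := key_sum f hf n hn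
  have h2 := Tsum_ge f c hmin n hn
  rw [riemannR_eq_Tsum, riemannR_eq_Tsum]
  have hcast : ((n+1:ℕ):ℝ) = (n:ℝ)+1 := by push_cast; ring
  rw [hcast]
  have e1 : 1/((n:ℝ)+1) * (Tsum f (n+1) - f 0) - (f c - f 0)/((n:ℝ)+1)
      = (Tsum f (n+1) - f c)/((n:ℝ)+1) := by field_simp; ring
  have e2 : 1/(n:ℝ) * (Tsum f n - f 0) - (f c - f 0)/(n:ℝ)
      = (Tsum f n - f c)/(n:ℝ) := by field_simp; ring
  rw [e1, e2, div_le_div_iff₀ hn1 hnpos]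
  nlinarith [h1, h2]

lemma riemann_eq (f : ℝ → ℝ) (c : ℝ) (n : ℕ) (hn : 1 ≤ n) :
    riemannR f n - (f c - f 0) / (n : ℝ) = riemannL f n - (f c - f 1) / (n : ℝ) := by
  have hnpos : (0:ℝ) < (n:ℝ) := by exact_mod_cast hn
  have hR : riemannR f n = (1 / (n:ℝ)) * ((∑ k ∈ Finset.range n, f ((k:ℝ)/(n:ℝ))) + f 1 - f 0) := by
    rw [riemannR_eq_Tsum, Tsum_succ_top f n hn]
  rw [hR, riemannL]
  field_simp
  ring

lemma riemannR_neg (f : ℝ → ℝ) (n : ℕ) : riemannR (-f) n = - riemannR f n := by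
  simp [riemannR, Finset.sum_neg_distrib]

theorem stmt6 (f : ℝ → ℝ) (c : ℝ) (hc : c ∈ Set.Icc (0:ℝ) 1) :
    ((ConcaveOn ℝ (Set.Icc (0:ℝ) 1) f ∧ ∀ x ∈ Set.Icc (0:ℝ) 1, f x ≤ f c) →
      (∀ n : ℕ, 1 ≤ n →
        riemannR f n - (f c - f 0) / (n : ℝ) = riemannL f n - (f c - f 1) / (n : ℝ)) ∧
      (∀ n : ℕ, 1 ≤ n →
        riemannR f n - (f c - f 0) / (n : ℝ) ≤
          riemannR f (n + 1) - (f c - f 0) / ((n : ℝ) + 1))) ∧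
    ((ConvexOn ℝ (Set.Icc (0:ℝ) 1) f ∧ ∀ x ∈ Set.Icc (0:ℝ) 1, f c ≤ f x) →
      (∀ n : ℕ, 1 ≤ n →
        riemannR f n - (f c - f 0) / (n : ℝ) = riemannL f n - (f c - f 1) / (n : ℝ)) ∧
      (∀ n : ℕ, 1 ≤ n →
        riemannR f (n + 1) - (f c - f 0) / ((n : ℝ) + 1) ≤
          riemannR f n - (f c - f 0) / (n : ℝ))) := by
  constructor
  · rintro ⟨hconc, hmax⟩
    refine ⟨fun n hn => riemann_eq f c n hn, fun n hn => ?_⟩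
    have hmin : ∀ x ∈ Set.Icc (0:ℝ) 1, (-f) c ≤ (-f) x := by
      intro x hx
      simp only [Pi.neg_apply]
      exact neg_le_neg (hmax x hx)
    have h := key_convex (-f) c hconc.neg hmin n hn
    simp only [Pi.neg_apply, riemannR_neg] at h
    have e1 : (-f c - -f 0) / ((n:ℝ)+1) = -((f c - f 0) / ((n:ℝ)+1)) := by ring
    have e2 : (-f c - -f 0) / (n:ℝ) = -((f c - f 0) / (n:ℝ)) := by ring
    rw [e1, e2] at h
    linarith
  · rintro ⟨hconv, hmin⟩
    exact ⟨fun n hn => riemann_eq f c n hn, fun n hn => key_convex f c hconv hmin n hn⟩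
end
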